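/- arXiv:0809.3948 — 2 statements merged into one kernel-verified Lean document; each statement's English description precedes it below -/
import Mathlib

section
/- Let d_1, …, d_M be pairwise commuting elements of an associative algebra and set T_a(u) = Σ_{k=1}^M P_{ak}/(u − d_k) (where for each k the d_k are scalars commuting with the matrix units and P_{ak} places the flip between the auxiliary space a and the k-th quantum space). Then for all admissible u, v: [T_a(u), T_b(v)] = [T_a(u) + T_b(v), P_{ab}/(u−v)]. -/
open PiTensorProduct
open scoped TensorProduct

variable (N M : ℕ)

/-- The tensor product of two auxiliary copies of `ℂ^N` (indexed by `Fin 2`)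
and `M` quantum copies of `ℂ^N` (indexed by `Fin M`). -/
abbrev TotSp (N M : ℕ) := ⨂[ℂ] _ : (Fin 2 ⊕ Fin M), (Fin N → ℂ)

/-- The flip `P_{xy}` between tensor factors `x` and `y`. -/
noncomputable def flipP (N M : ℕ) (x y : Fin 2 ⊕ Fin M) : Module.End ℂ (TotSp N M) :=
  (PiTensorProduct.reindex ℂ (fun _ : Fin 2 ⊕ Fin M => (Fin N → ℂ)) (Equiv.swap x y)).toLinearMap

/-- The monodromy matrix `T_a(u) = Σ_{k=1}^M P_{ak}/(u - d_k)` in auxiliary space `a`,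
with scalar Dunkl-type elements `d_k`. -/
noncomputable def monoT (N M : ℕ) (d : Fin M → ℂ) (a : Fin 2) (u : ℂ) :
    Module.End ℂ (TotSp N M) :=
  ∑ k : Fin M, (u - d k)⁻¹ • flipP N M (Sum.inl a) (Sum.inr k)

lemma flipP_comm (x y : Fin 2 ⊕ Fin M) : flipP N M x y = flipP N M y x := by
  unfold flipP; rw [Equiv.swap_comm]

lemma flipP_mul (x y z w : Fin 2 ⊕ Fin M) :
    flipP N M x y * flipP N M z w =
      (PiTensorProduct.reindex ℂ (fun _ : Fin 2 ⊕ Fin M => (Fin N → ℂ))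
        (Equiv.swap x y * Equiv.swap z w)).toLinearMap := by
  show (_ : Module.End ℂ (TotSp N M)).comp _ = _
  rw [Equiv.Perm.mul_def, ← PiTensorProduct.reindex_trans]
  rfl

lemma flipP_mul_congr {x y z w x' y' z' w' : Fin 2 ⊕ Fin M}
    (h : Equiv.swap x y * Equiv.swap z w = Equiv.swap x' y' * Equiv.swap z' w') :
    flipP N M x y * flipP N M z w = flipP N M x' y' * flipP N M z' w' := by
  rw [flipP_mul, flipP_mul, h]

lemma swap3 {α : Type*} [DecidableEq α] {x y z : α} (hxy : x ≠ y) (hyz : y ≠ z) :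
    Equiv.swap x z * Equiv.swap x y = Equiv.swap y z * Equiv.swap x z := by
  rw [Equiv.mul_swap_eq_swap_mul, Equiv.swap_apply_left,
    Equiv.swap_apply_of_ne_of_ne hxy.symm hyz, Equiv.swap_comm]

lemma swap_disj {α : Type*} [DecidableEq α] {x y z w : α} (hzx : z ≠ x) (hzy : z ≠ y)
    (hwx : w ≠ x) (hwy : w ≠ y) :
    Equiv.swap x y * Equiv.swap z w = Equiv.swap z w * Equiv.swap x y := by
  rw [Equiv.mul_swap_eq_swap_mul, Equiv.swap_apply_of_ne_of_ne hzx hzy,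
    Equiv.swap_apply_of_ne_of_ne hwx hwy]

/-- `P_{pr} P_{pq} = P_{qr} P_{pr}` for distinct `p, q, r`. -/
lemma flip_id1 {p q r : Fin 2 ⊕ Fin M} (hpq : p ≠ q) (hqr : q ≠ r) :
    flipP N M p r * flipP N M p q = flipP N M q r * flipP N M p r :=
  flipP_mul_congr N M (swap3 hpq hqr)

lemma lie_flip_neg {p q r : Fin 2 ⊕ Fin M} (hpq : p ≠ q) (hpr : p ≠ r) (hqr : q ≠ r) :
    ⁅flipP N M p r, flipP N M p q⁆ = -⁅flipP N M p r, flipP N M q r⁆ := by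
  have hA : flipP N M p r * flipP N M p q = flipP N M q r * flipP N M p r :=
    flip_id1 N M hpq hqr
  have hB : flipP N M p q * flipP N M p r = flipP N M q r * flipP N M p q := by
    have := flip_id1 N M (p := p) (q := r) (r := q) hpr hqr.symm
    rwa [flipP_comm N M r q] at this
  have hC : flipP N M q r * flipP N M p q = flipP N M p r * flipP N M q r := by
    have := flip_id1 N M (p := q) (q := p) (r := r) hpq.symm hpr
    rwa [flipP_comm N M q p] at this
  rw [LieRing.of_associative_ring_bracket, LieRing.of_associative_ring_bracket,
    hA, hB, hC]
  abel

lemma lie_flip_pos {p q r : Fin 2 ⊕ Fin M} (hpq : p ≠ q) (hpr : p ≠ r) (hqr : q ≠ r) :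
    ⁅flipP N M q r, flipP N M p q⁆ = ⁅flipP N M p r, flipP N M q r⁆ := by
  have hC : flipP N M q r * flipP N M p q = flipP N M p r * flipP N M q r := by
    have := flip_id1 N M (p := q) (q := p) (r := r) hpq.symm hpr
    rwa [flipP_comm N M q p] at this
  have hD : flipP N M p q * flipP N M q r = flipP N M q r * flipP N M p r := by
    have := flip_id1 N M (p := r) (q := p) (r := q) hpr.symm hpq
    rw [flipP_comm N M r q, flipP_comm N M r p] at this
    exact this.symm
  rw [LieRing.of_associative_ring_bracket, LieRing.of_associative_ring_bracket, hC, hD]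

lemma lie_flip_disj {p q : Fin 2 ⊕ Fin M} {k l : Fin M} (hqp : q ≠ p)
    (hqk : q ≠ Sum.inr k) (hlp : Sum.inr l ≠ p) (hkl : k ≠ l) :
    ⁅flipP N M p (Sum.inr k), flipP N M q (Sum.inr l)⁆ = 0 := by
  rw [LieRing.of_associative_ring_bracket,
    flipP_mul_congr N M (swap_disj hqp hqk hlp (by simp [hkl.symm])), sub_self]

lemma my_sum_lie {L : Type*} [LieRing L] {ι : Type*} (s : Finset ι) (f : ι → L) (y : L) :
    ⁅∑ i ∈ s, f i, y⁆ = ∑ i ∈ s, ⁅f i, y⁆ :=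
  map_sum (AddMonoidHom.mk' (fun x => ⁅x, y⁆) (fun a b => add_lie a b y)) f s

lemma my_lie_sum {L : Type*} [LieRing L] {ι : Type*} (s : Finset ι) (f : ι → L) (y : L) :
    ⁅y, ∑ i ∈ s, f i⁆ = ∑ i ∈ s, ⁅y, f i⁆ :=
  map_sum (AddMonoidHom.mk' (fun x => ⁅y, x⁆) (fun a b => lie_add y a b)) f s

lemma esum_lie {ι : Type*} (s : Finset ι) (f : ι → Module.End ℂ (TotSp N M))
    (y : Module.End ℂ (TotSp N M)) : ⁅∑ i ∈ s, f i, y⁆ = ∑ i ∈ s, ⁅f i, y⁆ :=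
  @my_sum_lie (Module.End ℂ (TotSp N M)) LieRing.ofAssociativeRing _ s f y

lemma elie_sum {ι : Type*} (s : Finset ι) (f : ι → Module.End ℂ (TotSp N M))
    (y : Module.End ℂ (TotSp N M)) : ⁅y, ∑ i ∈ s, f i⁆ = ∑ i ∈ s, ⁅y, f i⁆ :=
  @my_lie_sum (Module.End ℂ (TotSp N M)) LieRing.ofAssociativeRing _ s f y

lemma eadd_lie (x y z : Module.End ℂ (TotSp N M)) : ⁅x + y, z⁆ = ⁅x, z⁆ + ⁅y, z⁆ := by
  rw [LieRing.of_associative_ring_bracket, LieRing.of_associative_ring_bracket,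
    LieRing.of_associative_ring_bracket, add_mul, mul_add]
  abel

lemma esmul_lie (c : ℂ) (x y : Module.End ℂ (TotSp N M)) : ⁅c • x, y⁆ = c • ⁅x, y⁆ := by
  rw [LieRing.of_associative_ring_bracket, LieRing.of_associative_ring_bracket,
    smul_mul_assoc, mul_smul_comm, smul_sub]

lemma elie_smul (c : ℂ) (x y : Module.End ℂ (TotSp N M)) : ⁅x, c • y⁆ = c • ⁅x, y⁆ := by
  rw [LieRing.of_associative_ring_bracket, LieRing.of_associative_ring_bracket,
    smul_mul_assoc, mul_smul_comm, smul_sub]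

theorem stmt11 (d : Fin M → ℂ) (u v : ℂ)
    (hu : ∀ k, u ≠ d k) (hv : ∀ k, v ≠ d k) (huv : u ≠ v) :
    ⁅monoT N M d 0 u, monoT N M d 1 v⁆ =
      ⁅monoT N M d 0 u + monoT N M d 1 v,
        (u - v)⁻¹ • flipP N M (Sum.inl 0) (Sum.inl 1)⁆ := by
  have hab : (Sum.inl 0 : Fin 2 ⊕ Fin M) ≠ Sum.inl 1 := by simp
  have hak : ∀ k : Fin M, (Sum.inl 0 : Fin 2 ⊕ Fin M) ≠ Sum.inr k := by simp
  have hbk : ∀ k : Fin M, (Sum.inl 1 : Fin 2 ⊕ Fin M) ≠ Sum.inr k := by simp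
  have hA : ∀ k, u - d k ≠ 0 := fun k => sub_ne_zero.mpr (hu k)
  have hB : ∀ k, v - d k ≠ 0 := fun k => sub_ne_zero.mpr (hv k)
  have hW : u - v ≠ 0 := sub_ne_zero.mpr huv
  unfold monoT
  simp only [eadd_lie, esmul_lie, elie_smul, esum_lie, elie_sum, Finset.smul_sum]
  rw [Finset.sum_comm]
  rw [smul_add, Finset.smul_sum, Finset.smul_sum, ← Finset.sum_add_distrib]
  refine Finset.sum_congr rfl fun k _ => ?_
  rw [Finset.sum_eq_single k
    (fun l _ hlk => by
      rw [lie_flip_disj N M hab.symm (hbk k) (hak l).symm (fun h => hlk (h ▸ rfl))]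
      simp)
    (by simp)]
  rw [lie_flip_neg N M hab (hak k) (hbk k), lie_flip_pos N M hab (hak k) (hbk k)]
  have key : ∀ X : Module.End ℂ (TotSp N M), (v - d k)⁻¹ • (u - d k)⁻¹ • X =
      (u - v)⁻¹ • (u - d k)⁻¹ • -X + (u - v)⁻¹ • (v - d k)⁻¹ • X := by
    intro X
    refine LinearMap.ext fun w => ?_
    simp only [LinearMap.smul_apply, LinearMap.neg_apply, LinearMap.add_apply]
    rw [smul_neg, smul_neg, smul_smul, smul_smul, smul_smul, ← neg_smul, ← add_smul]
    congr 1
    field_simp [hA k, hB k, hW]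
    ring
  exact key _
end

section
/- Suppose operators B_a(u) satisfy [B_a(u), B_b(v)] = (1/n) Σ_{j=0}^{n−1} [τ^j B_a(u) + B_b(v), (σ^j)_b P_{ab} (σ^{−j})_b / (u − τ^j v)] with τ^n = 1 and σ ∈ GL_N(ℂ). Then b(u) := Tr_a B_a(u) satisfies [b(u), B_b(v)] = 0 and [b(u), b(v)] = 0 for all admissible u, v. -/
open Finset

variable {N : ℕ} {A : Type*} [Ring A] [Algebra ℂ A]

/-- A matrix placed in the first auxiliary space (identity in second). -/
def auxA {N : ℕ} {A : Type*} [Ring A] (T : Matrix (Fin N) (Fin N) A) :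
    Matrix (Fin N) (Fin N) (Matrix (Fin N) (Fin N) A) :=
  T.map (fun x => Matrix.diagonal (fun _ => x))

/-- A matrix placed in the second auxiliary space (identity in first). -/
def auxB {N : ℕ} {A : Type*} [Ring A] (T : Matrix (Fin N) (Fin N) A) :
    Matrix (Fin N) (Fin N) (Matrix (Fin N) (Fin N) A) :=
  Matrix.diagonal (fun _ => T)

/-- The flip operator `P_{ab}` in the two auxiliary spaces. -/
def flipAB (N : ℕ) (A : Type*) [Ring A] :
    Matrix (Fin N) (Fin N) (Matrix (Fin N) (Fin N) A) :=
  fun i j => fun k l => if i = l ∧ j = k then 1 else 0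

/-- A scalar matrix `C` placed in the second auxiliary space: `(C)_b`. -/
def scalB (N : ℕ) (A : Type*) [Ring A] [Algebra ℂ A] (C : Matrix (Fin N) (Fin N) ℂ) :
    Matrix (Fin N) (Fin N) (Matrix (Fin N) (Fin N) A) :=
  Matrix.diagonal (fun _ => C.map (algebraMap ℂ A))

lemma M_apply (C D : Matrix (Fin N) (Fin N) ℂ) (a c p q : Fin N) :
    (scalB N A C * flipAB N A * scalB N A D) a c p q
      = algebraMap ℂ A (C p c) * algebraMap ℂ A (D a q) := by
  simp [scalB, flipAB, Matrix.mul_apply, Matrix.diagonal_apply, Matrix.map_apply,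
    ite_and, Finset.mul_sum, Finset.sum_mul, apply_ite, mul_ite, ite_mul]

lemma ptrA (X : Matrix (Fin N) (Fin N) A) (C D : Matrix (Fin N) (Fin N) ℂ) (p q : Fin N) :
    ∑ a, (⁅auxA X, scalB N A C * flipAB N A * scalB N A D⁆ a a) p q = 0 := by
  set M := scalB N A C * flipAB N A * scalB N A D with hM
  simp only [Ring.lie_def, Matrix.sub_apply, Matrix.mul_apply, Matrix.sum_apply, auxA,
    Matrix.map_apply, Matrix.diagonal_apply, ite_mul, mul_ite, zero_mul, mul_zero,
    Finset.sum_ite_eq, Finset.sum_ite_eq', Finset.mem_univ, if_true]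
  rw [Finset.sum_sub_distrib, sub_eq_zero, Finset.sum_comm]
  refine Finset.sum_congr rfl fun a _ => Finset.sum_congr rfl fun e _ => ?_
  rw [hM, M_apply, ← map_mul, Algebra.commutes]

lemma ptrB (Y : Matrix (Fin N) (Fin N) A) (C D : Matrix (Fin N) (Fin N) ℂ)
    (hCD : C * D = 1) (p q : Fin N) :
    ∑ a, (⁅auxB Y, scalB N A C * flipAB N A * scalB N A D⁆ a a) p q = 0 := by
  set M := scalB N A C * flipAB N A * scalB N A D with hM
  simp only [Ring.lie_def, Matrix.sub_apply, Matrix.mul_apply, Matrix.sum_apply, auxB,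
    Matrix.diagonal_apply, ite_mul, mul_ite, zero_mul, mul_zero,
    Finset.sum_ite_eq, Finset.sum_ite_eq', Finset.mem_univ, if_true]
  simp only [hM, M_apply, ← map_mul]
  rw [Finset.sum_sub_distrib, sub_eq_zero, Finset.sum_comm]
  conv_rhs => rw [Finset.sum_comm]
  simp only [← Finset.mul_sum, ← Finset.sum_mul, ← map_sum, ← Matrix.mul_apply, hCD,
    Matrix.one_apply, apply_ite (algebraMap ℂ A), map_one, map_zero, mul_ite, ite_mul,
    mul_one, one_mul, mul_zero, zero_mul, Finset.sum_ite_eq, Finset.sum_ite_eq',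
    Finset.mem_univ, if_true]

lemma ptrAB (X Y : Matrix (Fin N) (Fin N) A) (p q : Fin N) :
    ∑ a, (⁅auxA X, auxB Y⁆ a a) p q = X.trace * Y p q - Y p q * X.trace := by
  simp only [Ring.lie_def, Matrix.sub_apply, Matrix.mul_apply, Matrix.sum_apply, auxA, auxB,
    Matrix.map_apply, Matrix.diagonal_apply, ite_mul, mul_ite, zero_mul, mul_zero,
    Finset.sum_ite_eq, Finset.sum_ite_eq', Finset.mem_univ, if_true,
    Matrix.trace, Matrix.diag, Finset.sum_mul, Finset.sum_sub_distrib]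
  rw [Finset.mul_sum]

lemma ptr_term (X Y : Matrix (Fin N) (Fin N) A) (C D : Matrix (Fin N) (Fin N) ℂ)
    (hCD : C * D = 1) (t c : ℂ) (p q : Fin N) :
    ∑ a, ((⁅t • auxA X + auxB Y,
        c • (scalB N A C * flipAB N A * scalB N A D)⁆) a a) p q = 0 := by
  have hL : (⁅t • auxA X + auxB Y, c • (scalB N A C * flipAB N A * scalB N A D)⁆ :
      Matrix (Fin N) (Fin N) (Matrix (Fin N) (Fin N) A))
      = c • (t • ⁅auxA X, scalB N A C * flipAB N A * scalB N A D⁆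
        + ⁅auxB Y, scalB N A C * flipAB N A * scalB N A D⁆) := by
    simp only [Ring.lie_def, mul_smul_comm, smul_mul_assoc, add_mul, mul_add, smul_sub,
      smul_add]
    rw [smul_comm t c]
    abel
  rw [hL]
  simp only [Matrix.smul_apply, Matrix.add_apply]
  rw [← Finset.smul_sum, Finset.sum_add_distrib, ← Finset.smul_sum,
    ptrA, ptrB _ _ _ hCD, smul_zero, add_zero, smul_zero]

theorem stmt13 (n : ℕ) (hn : 1 ≤ n) (τ : ℂ) (hτ : τ ^ n = 1)
    (σ : (Matrix (Fin N) (Fin N) ℂ)ˣ) (S : Set ℂ)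
    (B : ℂ → Matrix (Fin N) (Fin N) A)
    (hB : ∀ u v : ℂ, u ∉ S → v ∉ S → (∀ j < n, u ≠ τ ^ j * v) →
      ⁅auxA (B u), auxB (B v)⁆ =
        (n : ℂ)⁻¹ • ∑ j ∈ range n,
          ⁅(τ ^ j) • auxA (B u) + auxB (B v),
            (u - τ ^ j * v)⁻¹ •
              (scalB N A ((σ ^ j : (Matrix (Fin N) (Fin N) ℂ)ˣ) : Matrix (Fin N) (Fin N) ℂ)
                * flipAB N A
                * scalB N A ((σ⁻¹ ^ j : (Matrix (Fin N) (Fin N) ℂ)ˣ) :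
                    Matrix (Fin N) (Fin N) ℂ))⁆) :
    ∀ u v : ℂ, u ∉ S → v ∉ S → (∀ j < n, u ≠ τ ^ j * v) →
      (∀ i j : Fin N, Commute ((B u).trace) (B v i j)) ∧
      Commute ((B u).trace) ((B v).trace) := by
  intro u v hu hv huv
  have hCD : ∀ j : ℕ,
      ((σ ^ j : (Matrix (Fin N) (Fin N) ℂ)ˣ) : Matrix (Fin N) (Fin N) ℂ)
        * ((σ⁻¹ ^ j : (Matrix (Fin N) (Fin N) ℂ)ˣ) : Matrix (Fin N) (Fin N) ℂ) = 1 := by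
    intro j
    rw [← Units.val_mul, inv_pow, mul_inv_cancel, Units.val_one]
  have key : ∀ p q : Fin N, Commute ((B u).trace) (B v p q) := by
    intro p q
    have E2 := congrArg
      (fun M : Matrix (Fin N) (Fin N) (Matrix (Fin N) (Fin N) A) => ∑ a, (M a a) p q)
      (hB u v hu hv huv)
    simp only [Matrix.smul_apply, Matrix.sum_apply, ptrAB] at E2
    rw [← Finset.smul_sum, Finset.sum_comm,
      Finset.sum_eq_zero (fun j _ => ptr_term (B u) (B v) _ _ (hCD j) _ _ p q),
      smul_zero, sub_eq_zero] at E2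
    exact E2
  exact ⟨key, by
    rw [Matrix.trace]
    exact Commute.sum_right _ _ _ fun i _ => key i i⟩
end
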